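/- Let X = ∑ x_i where x_i are independent symmetric (around 0) random variables with |x_i| ≤ a_i almost surely, and let F(t) = Pr[X > t]. Set m = 2·max_i a_i. Then for every t ≥ 0 and δ > 0, letting l = 1 + ⌊t/δ⌋, we have F(t+δ+m)^l ≤ 2·F(t)^(l+1). -/

import Mathlib

open MeasureTheory ProbabilityTheory Finset
open scoped ENNReal NNReal

namespace LogConcaveAux

/-! Auxiliary combinatorics on the doubled coordinate space `(Fin n × Bool) → ℝ`. -/

/-- The doubled coordinate space: two independent copies of the `n` coordinates. -/
abbrev Wd (n : ℕ) := (Fin n × Bool) → ℝ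

/-- Sum of the first copy. -/
def Ysum (n : ℕ) (w : Wd n) : ℝ := ∑ i : Fin n, w (i, true)

/-- Sum of the second copy. -/
def Zsum (n : ℕ) (w : Wd n) : ℝ := ∑ i : Fin n, w (i, false)

/-- Increment of the difference process. -/
def dd (n : ℕ) (w : Wd n) (j : ℕ) : ℝ :=
  if h : j < n then w (⟨j, h⟩, true) - w (⟨j, h⟩, false) else 0

/-- Partial sums of differences between the two copies. -/
def Dk (n : ℕ) (k : ℕ) (w : Wd n) : ℝ := ∑ j ∈ Finset.range k, dd n w j

/-- The swap permutation of indices: swap the two copies at coordinates `≥ k`. -/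
def sig (n : ℕ) (k : ℕ) (j : Fin n × Bool) : Fin n × Bool :=
  if k ≤ (j.1 : ℕ) then (j.1, !j.2) else j

/-- The tail-swap map. -/
def Phi (n : ℕ) (k : ℕ) (w : Wd n) : Wd n := fun j => w (sig n k j)

lemma sig_invol (n k : ℕ) (j : Fin n × Bool) : sig n k (sig n k j) = j := by
  unfold sig
  by_cases h : k ≤ (j.1 : ℕ) <;> simp [h]

lemma sig_fst (n k : ℕ) (j : Fin n × Bool) : (sig n k j).1 = j.1 := by
  unfold sig; split <;> rfl

lemma Phi_invol (n k : ℕ) (w : Wd n) : Phi n k (Phi n k w) = w := by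
  funext j
  simp [Phi, sig_invol]

lemma measurable_Ysum (n : ℕ) : Measurable (Ysum n) :=
  Finset.measurable_sum _ fun _ _ => measurable_pi_apply _

lemma measurable_Zsum (n : ℕ) : Measurable (Zsum n) :=
  Finset.measurable_sum _ fun _ _ => measurable_pi_apply _

lemma measurable_dd (n j : ℕ) : Measurable (fun w => dd n w j) := by
  unfold dd
  split
  · exact (measurable_pi_apply _).sub (measurable_pi_apply _)
  · exact measurable_const

lemma measurable_Dk (n k : ℕ) : Measurable (Dk n k) :=
  Finset.measurable_sum _ fun j _ => measurable_dd n j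

lemma measurable_Phi (n k : ℕ) : Measurable (Phi n k) :=
  measurable_pi_lambda _ fun j => measurable_pi_apply _

lemma range_filter_lt (k n : ℕ) (hk : k ≤ n) :
    (Finset.range n).filter (fun j => j < k) = Finset.range k := by
  ext j
  simp only [Finset.mem_filter, Finset.mem_range]
  omega

/-- `Dk` as a sum over `Fin n` with an indicator. -/
lemma Dk_eq_finsum (n k : ℕ) (hk : k ≤ n) (w : Wd n) :
    Dk n k w = ∑ i : Fin n, (if (i : ℕ) < k then w (i, true) - w (i, false) else 0) := by
  have h1 : ∀ i : Fin n,
      (if (i : ℕ) < k then w (i, true) - w (i, false) else 0)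
        = (fun j : ℕ => if j < k then dd n w j else 0) (i : ℕ) := by
    intro i
    by_cases h : (i : ℕ) < k <;> simp [h, dd, i.isLt]
  calc Dk n k w = ∑ j ∈ Finset.range k, dd n w j := rfl
    _ = ∑ j ∈ (Finset.range n).filter (fun j => j < k), dd n w j := by
        rw [range_filter_lt k n hk]
    _ = ∑ j ∈ Finset.range n, (if j < k then dd n w j else 0) := by
        rw [Finset.sum_filter]
    _ = ∑ i : Fin n, (if (i : ℕ) < k then w (i, true) - w (i, false) else 0) := by
        rw [← Fin.sum_univ_eq_sum_range (fun j : ℕ => if j < k then dd n w j else 0) n]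
        exact (Finset.sum_congr rfl fun i _ => h1 i).symm

lemma Ysum_Phi (n k : ℕ) (hk : k ≤ n) (w : Wd n) :
    Ysum n (Phi n k w) = Zsum n w + Dk n k w := by
  have h : Ysum n (Phi n k w) - Zsum n w = Dk n k w := by
    rw [Dk_eq_finsum n k hk w]
    unfold Ysum Zsum
    rw [← Finset.sum_sub_distrib]
    refine Finset.sum_congr rfl fun i _ => ?_
    by_cases h : k ≤ (i : ℕ)
    · simp [Phi, sig, h, not_lt.mpr h]
    · simp [Phi, sig, h, not_le.mp h]
  linarith

lemma Zsum_Phi (n k : ℕ) (hk : k ≤ n) (w : Wd n) :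
    Zsum n (Phi n k w) = Ysum n w - Dk n k w := by
  have h : Zsum n (Phi n k w) - Ysum n w = -Dk n k w := by
    rw [Dk_eq_finsum n k hk w]
    unfold Ysum Zsum
    rw [← Finset.sum_sub_distrib, ← Finset.sum_neg_distrib]
    refine Finset.sum_congr rfl fun i _ => ?_
    by_cases h : k ≤ (i : ℕ)
    · simp [Phi, sig, h, not_lt.mpr h]
    · simp [Phi, sig, h, not_le.mp h]
  linarith

lemma Dk_Phi (n j k : ℕ) (hjk : j ≤ k) (w : Wd n) :
    Dk n j (Phi n k w) = Dk n j w := by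
  unfold Dk
  refine Finset.sum_congr rfl fun r hr => ?_
  have hrk : r < k := lt_of_lt_of_le (Finset.mem_range.mp hr) hjk
  unfold dd
  split
  · simp [Phi, sig, not_le.mpr hrk]
  · rfl

lemma Dk_n_eq (n : ℕ) (w : Wd n) : Dk n n w = Ysum n w - Zsum n w := by
  rw [Dk_eq_finsum n n le_rfl w]
  unfold Ysum Zsum
  rw [← Finset.sum_sub_distrib]
  refine Finset.sum_congr rfl fun i _ => ?_
  simp [i.isLt]

lemma Dk_zero (n : ℕ) (w : Wd n) : Dk n 0 w = 0 := by
  simp [Dk]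

end LogConcaveAux

open LogConcaveAux

section KeyLemma

variable {Ω : Type*} [MeasurableSpace Ω]

/-- The joint law of two independent copies of the coordinates, as a `pi` measure. -/
lemma law_doubled (μ : Measure Ω) [IsProbabilityMeasure μ]
    (n : ℕ) (x : Fin n → Ω → ℝ)
    (hmeas : ∀ i, Measurable (x i))
    (hindep : iIndepFun x μ) :
    (μ.prod μ).map (fun (p : Ω × Ω) (j : Fin n × Bool) =>
        if j.2 then x j.1 p.1 else x j.1 p.2)
      = Measure.pi (fun j : Fin n × Bool => μ.map (x j.1)) := by
  haveI : ∀ j : Fin n × Bool, IsProbabilityMeasure (μ.map (x j.1)) :=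
    fun j => Measure.isProbabilityMeasure_map (hmeas j.1).aemeasurable
  set Xh : Ω × Ω → Wd n := fun p j => if j.2 then x j.1 p.1 else x j.1 p.2 with hXh
  have hXhmeas : Measurable Xh := by
    apply measurable_pi_lambda
    rintro ⟨i, b⟩
    cases b
    · simpa [hXh, Function.comp_def] using (hmeas i).comp measurable_snd
    · simpa [hXh, Function.comp_def] using (hmeas i).comp measurable_fst
  refine (Measure.pi_eq fun s hs => ?_).symm
  rw [Measure.map_apply hXhmeas (MeasurableSet.univ_pi hs)]
  have hpre : Xh ⁻¹' (Set.univ.pi s)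
      = (⋂ i, x i ⁻¹' s (i, true)) ×ˢ (⋂ i, x i ⁻¹' s (i, false)) := by
    ext ⟨ω, ω'⟩
    simp only [Set.mem_preimage, Set.mem_pi, Set.mem_univ, forall_true_left, Set.mem_prod,
      Set.mem_iInter, hXh, Prod.forall, Bool.forall_bool]
    constructor
    · intro h
      exact ⟨fun i => by simpa using (h i).2, fun i => by simpa using (h i).1⟩
    · intro h i
      exact ⟨by simpa using h.2 i, by simpa using h.1 i⟩
  rw [hpre, Measure.prod_prod]
  have hprod : ∀ (t : Fin n → Set ℝ), (∀ i, MeasurableSet (t i)) →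
      μ (⋂ i, x i ⁻¹' t i) = ∏ i, μ (x i ⁻¹' t i) := by
    intro t ht
    have := hindep.measure_inter_preimage_eq_mul (S := Finset.univ)
      (sets := t) (fun i _ => ht i)
    simpa using this
  rw [hprod _ (fun i => hs (i, true)), hprod _ (fun i => hs (i, false))]
  rw [Fintype.prod_prod_type (fun j : Fin n × Bool => (μ.map (x j.1)) (s j))]
  simp only [Fintype.prod_bool]
  rw [Finset.prod_mul_distrib]
  congr 1 <;> exact Finset.prod_congr rfl fun i _ =>
    (Measure.map_apply (hmeas i) (hs _)).symm

/-- The tail-swap map preserves the doubled pi measure. -/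
lemma law_Phi (μ : Measure Ω) [IsProbabilityMeasure μ]
    (n : ℕ) (x : Fin n → Ω → ℝ) (hmeas : ∀ i, Measurable (x i)) (k : ℕ) :
    (Measure.pi (fun j : Fin n × Bool => μ.map (x j.1))).map (Phi n k)
      = Measure.pi (fun j : Fin n × Bool => μ.map (x j.1)) := by
  haveI : ∀ j : Fin n × Bool, IsProbabilityMeasure (μ.map (x j.1)) :=
    fun j => Measure.isProbabilityMeasure_map (hmeas j.1).aemeasurable
  refine (Measure.pi_eq fun s hs => ?_).symm
  rw [Measure.map_apply (measurable_Phi n k) (MeasurableSet.univ_pi hs)]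
  have hpre : Phi n k ⁻¹' (Set.univ.pi s) = Set.univ.pi (fun j => s (sig n k j)) := by
    ext w
    simp only [Set.mem_preimage, Set.mem_pi, Set.mem_univ, forall_true_left, Phi]
    constructor
    · intro h j
      have := h (sig n k j)
      rwa [sig_invol] at this
    · intro h j
      have := h (sig n k j)
      rwa [sig_invol] at this
  rw [hpre, Measure.pi_pi]
  have h1 : ∀ j : Fin n × Bool,
      (μ.map (x j.1)) (s (sig n k j)) = (μ.map (x (sig n k j).1)) (s (sig n k j)) := by
    intro j; rw [sig_fst]
  rw [Finset.prod_congr rfl fun j _ => h1 j]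
  exact Equiv.prod_comp (⟨sig n k, sig n k, sig_invol n k, sig_invol n k⟩ : _ ≃ _)
    (fun j => (μ.map (x j.1)) (s j))

/-- **Key reflection lemma** : `Pr[S > A+δ+m]·Pr[S > B] ≤ Pr[S > B+δ]·Pr[S > A]`
whenever `B + δ ≤ A + m`. -/
lemma key_R (μ : Measure Ω) [IsProbabilityMeasure μ]
    (n : ℕ) (x : Fin n → Ω → ℝ) (a : Fin n → ℝ) (m : ℝ)
    (hmeas : ∀ i, Measurable (x i))
    (hindep : iIndepFun x μ)
    (hbdd : ∀ i, ∀ᵐ ω ∂μ, |x i ω| ≤ a i)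
    (ham : ∀ i, 2 * a i ≤ m) (hm0 : 0 ≤ m)
    (A B δ : ℝ) (hδ : 0 < δ) (hba : B + δ ≤ A + m) :
    μ {ω | A + δ + m < ∑ i, x i ω} * μ {ω | B < ∑ i, x i ω} ≤
      μ {ω | B + δ < ∑ i, x i ω} * μ {ω | A < ∑ i, x i ω} := by
  classical
  haveI : ∀ j : Fin n × Bool, IsProbabilityMeasure (μ.map (x j.1)) :=
    fun j => Measure.isProbabilityMeasure_map (hmeas j.1).aemeasurable
  set π : Measure (Wd n) := Measure.pi (fun j : Fin n × Bool => μ.map (x j.1)) with hπ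
  haveI : IsProbabilityMeasure π := by rw [hπ]; infer_instance
  set Xh : Ω × Ω → Wd n := fun p j => if j.2 then x j.1 p.1 else x j.1 p.2 with hXh
  have hXhmeas : Measurable Xh := by
    apply measurable_pi_lambda
    rintro ⟨i, b⟩
    cases b
    · simpa [hXh, Function.comp_def] using (hmeas i).comp measurable_snd
    · simpa [hXh, Function.comp_def] using (hmeas i).comp measurable_fst
  have hlaw : (μ.prod μ).map Xh = π := law_doubled μ n x hmeas hindep
  -- the sets
  set Aset : Set (Wd n) := {w | A + δ + m < Ysum n w} ∩ {w | B < Zsum n w} with hAset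
  set Bset : Set (Wd n) := {w | B + δ < Ysum n w} ∩ {w | A < Zsum n w} with hBset
  set G : Set (Wd n) := Set.univ.pi (fun j : Fin n × Bool => {r : ℝ | |r| ≤ a j.1}) with hGdef
  set Cr : ℕ → Set (Wd n) := fun k =>
    {w | δ ≤ Dk n k w} ∩ (⋂ (j : ℕ), ⋂ (_ : j < k), {w | Dk n j w < δ}) with hCr
  set InfS : Set (Wd n) := ⋂ (j : ℕ), ⋂ (_ : j ≤ n), {w | Dk n j w < δ} with hInfS
  have hmY : ∀ c : ℝ, MeasurableSet {w : Wd n | c < Ysum n w} :=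
    fun c => measurableSet_lt measurable_const (measurable_Ysum n)
  have hmZ : ∀ c : ℝ, MeasurableSet {w : Wd n | c < Zsum n w} :=
    fun c => measurableSet_lt measurable_const (measurable_Zsum n)
  have hmA : MeasurableSet Aset := (hmY _).inter (hmZ _)
  have hmB : MeasurableSet Bset := (hmY _).inter (hmZ _)
  have hmG : MeasurableSet G := by
    apply MeasurableSet.univ_pi
    intro j
    exact measurableSet_le (_root_.continuous_abs.measurable) measurable_const
  have hmCr : ∀ k, MeasurableSet (Cr k) := by
    intro k
    refine (measurableSet_le measurable_const (measurable_Dk n k)).inter ?_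
    exact MeasurableSet.iInter fun j => MeasurableSet.iInter fun _ =>
      measurableSet_lt (measurable_Dk n j) measurable_const
  have hmInf : MeasurableSet InfS :=
    MeasurableSet.iInter fun j => MeasurableSet.iInter fun _ =>
      measurableSet_lt (measurable_Dk n j) measurable_const
  -- G has full measure
  have hGfull : π Gᶜ = 0 := by
    have hG1 : π G = 1 := by
      rw [hGdef, hπ, Measure.pi_pi]
      have h1 : ∀ j : Fin n × Bool, (μ.map (x j.1)) {r : ℝ | |r| ≤ a j.1} = 1 := by
        intro j
        rw [Measure.map_apply (hmeas j.1)
          (measurableSet_le (_root_.continuous_abs.measurable) measurable_const)]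
        have h0 : μ {ω | ¬ |x j.1 ω| ≤ a j.1} = 0 := by
          have := hbdd j.1
          rwa [ae_iff] at this
        have : μ (x j.1 ⁻¹' {r : ℝ | |r| ≤ a j.1}) + μ {ω | ¬ |x j.1 ω| ≤ a j.1}
            ≥ μ Set.univ := by
          refine le_trans (measure_mono ?_) (measure_union_le _ _)
          intro ω _
          by_cases h : |x j.1 ω| ≤ a j.1
          · exact Or.inl h
          · exact Or.inr h
        rw [h0, add_zero, measure_univ] at this
        exact le_antisymm prob_le_one this
      rw [Finset.prod_congr rfl fun j _ => h1 j]
      simp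
    have := measure_compl hmG (measure_ne_top π G)
    rw [hG1, measure_univ] at this
    simpa using this
  -- transfer to product of one-dimensional tails
  have htransfer : ∀ c c' : ℝ,
      π ({w | c < Ysum n w} ∩ {w | c' < Zsum n w})
        = μ {ω | c < ∑ i, x i ω} * μ {ω | c' < ∑ i, x i ω} := by
    intro c c'
    rw [← hlaw, Measure.map_apply hXhmeas ((hmY c).inter (hmZ c'))]
    have hpre : Xh ⁻¹' ({w | c < Ysum n w} ∩ {w | c' < Zsum n w})
        = {ω | c < ∑ i, x i ω} ×ˢ {ω | c' < ∑ i, x i ω} := by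
      ext ⟨ω, ω'⟩
      simp only [Set.mem_preimage, Set.mem_inter_iff, Set.mem_setOf_eq, Set.mem_prod,
        hXh, Ysum, Zsum]
      simp
    rw [hpre, Measure.prod_prod]
  -- the pointwise step lemma
  have hstep : ∀ k, k ≤ n → ∀ w, w ∈ (Phi n k) ⁻¹' ((Aset ∩ G) ∩ Cr k) →
      w ∈ Bset ∩ Cr k := by
    intro k hk w hw
    set v := Phi n k w with hv
    obtain ⟨⟨⟨hY, hZ⟩, hGv⟩, hcr1, hcr2'⟩ := hw
    have hcr2 : ∀ j, j < k → Dk n j v < δ := by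
      intro j hj
      have := Set.mem_iInter.mp hcr2' j
      exact Set.mem_iInter.mp this hj
    have habs : ∀ j : Fin n × Bool, |v j| ≤ a j.1 := by
      intro j
      exact hGv j (Set.mem_univ j)
    have hk1 : 1 ≤ k := by
      by_contra h
      push_neg at h
      interval_cases k
      rw [Set.mem_setOf_eq, Dk_zero] at hcr1
      linarith
    -- the crossing bound
    have hdb : Dk n k v < δ + m := by
      have hkeq : k = (k - 1) + 1 := (Nat.succ_pred_eq_of_pos hk1).symm
      have hsum : Dk n k v = Dk n (k - 1) v + dd n v (k - 1) := by
        rw [hkeq]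
        exact Finset.sum_range_succ _ _
      have h1 : Dk n (k - 1) v < δ := hcr2 (k - 1) (by omega)
      have h2 : dd n v (k - 1) ≤ m := by
        have hlt : k - 1 < n := by omega
        have ha1 := habs (⟨k - 1, hlt⟩, true)
        have ha2 := habs (⟨k - 1, hlt⟩, false)
        have h2a := ham (⟨k - 1, hlt⟩ : Fin n)
        rw [dd, dif_pos hlt]
        have := abs_le.mp ha1
        have := abs_le.mp ha2
        simp only at *
        linarith [this.1, this.2]
      linarith
    have hweq : w = Phi n k v := by rw [hv, Phi_invol]
    have hYw : Ysum n w = Zsum n v + Dk n k v := by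
      rw [hweq]; exact Ysum_Phi n k hk v
    have hZw : Zsum n w = Ysum n v - Dk n k v := by
      rw [hweq]; exact Zsum_Phi n k hk v
    rw [Set.mem_setOf_eq] at hY hZ hcr1
    refine ⟨⟨?_, ?_⟩, ?_, ?_⟩
    · rw [Set.mem_setOf_eq, hYw]; linarith
    · rw [Set.mem_setOf_eq, hZw]; linarith
    · rw [Set.mem_setOf_eq, hweq, Dk_Phi n k k le_rfl]; exact hcr1
    · refine Set.mem_iInter.mpr fun j => Set.mem_iInter.mpr fun hj => ?_
      rw [Set.mem_setOf_eq, hweq, Dk_Phi n j k (le_of_lt hj)]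
      exact hcr2 j hj
  -- no-crossing case
  have hinf : (Aset ∩ G) ∩ InfS ⊆ Bset ∩ InfS := by
    rintro w ⟨⟨⟨hY, hZ⟩, _⟩, hinfw⟩
    have hDn : Dk n n w < δ := by
      have := Set.mem_iInter.mp hinfw n
      exact Set.mem_iInter.mp this le_rfl
    rw [Dk_n_eq] at hDn
    rw [Set.mem_setOf_eq] at hY hZ
    refine ⟨⟨?_, ?_⟩, hinfw⟩
    · rw [Set.mem_setOf_eq]; linarith
    · rw [Set.mem_setOf_eq]; linarith
  -- the cover
  have hcover : Aset ∩ G ⊆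
      (⋃ k ∈ Finset.range (n + 1), ((Aset ∩ G) ∩ Cr k)) ∪ ((Aset ∩ G) ∩ InfS) := by
    intro w hw
    by_cases hc : ∀ j, j ≤ n → Dk n j w < δ
    · right
      exact ⟨hw, Set.mem_iInter.mpr fun j => Set.mem_iInter.mpr fun hj => hc j hj⟩
    · left
      push_neg at hc
      obtain ⟨j₀, hj₀n, hj₀⟩ := hc
      have hex : ∃ j, δ ≤ Dk n j w := ⟨j₀, hj₀⟩
      set k := Nat.find hex with hkdef
      have hkspec : δ ≤ Dk n k w := Nat.find_spec hex
      have hkmin : ∀ j, j < k → Dk n j w < δ := by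
        intro j hj
        have := Nat.find_min hex hj
        linarith [not_le.mp this]
      have hkle : k ≤ n := le_trans (Nat.find_min' hex hj₀) hj₀n
      exact Set.mem_iUnion₂.mpr ⟨k, Finset.mem_range.mpr (by omega),
        ⟨hw, hkspec, Set.mem_iInter.mpr fun j => Set.mem_iInter.mpr fun hj => hkmin j hj⟩⟩
  -- disjointness
  have hCrdisj : ∀ k k', k < k' → Disjoint (Cr k) (Cr k') := by
    intro k k' hkk'
    rw [Set.disjoint_left]
    rintro w ⟨hw1, _⟩ ⟨_, hw2'⟩
    have hw2 := Set.mem_iInter.mp (Set.mem_iInter.mp hw2' k) hkk'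
    rw [Set.mem_setOf_eq] at hw1 hw2
    linarith
  have hdisjB : ((Finset.range (n + 1) : Finset ℕ) : Set ℕ).PairwiseDisjoint
      (fun k => Bset ∩ Cr k) := by
    intro k _ k' _ hne
    rcases lt_or_gt_of_ne hne with h | h
    · exact Disjoint.mono Set.inter_subset_right Set.inter_subset_right (hCrdisj k k' h)
    · exact Disjoint.mono Set.inter_subset_right Set.inter_subset_right
        ((hCrdisj k' k h).symm)
  have hdisjInf : Disjoint (⋃ k ∈ Finset.range (n + 1), (Bset ∩ Cr k)) (Bset ∩ InfS) := by
    rw [Set.disjoint_left]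
    intro w hw hw'
    obtain ⟨k, hk, hwk⟩ := Set.mem_iUnion₂.mp hw
    obtain ⟨_, hcrk, _⟩ := hwk
    have hkn : k ≤ n := by
      have := Finset.mem_range.mp hk; omega
    have := Set.mem_iInter.mp (Set.mem_iInter.mp hw'.2 k) hkn
    rw [Set.mem_setOf_eq] at hcrk this
    linarith
  -- measure chain
  have hAG : π (Aset ∩ G) = π Aset := by
    have h1 := measure_inter_add_diff (μ := π) Aset hmG
    have h2 : π (Aset \ G) = 0 :=
      measure_mono_null (fun w hw => hw.2) hGfull
    rw [h2, add_zero] at h1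
    exact h1
  have hstepk : ∀ k ∈ Finset.range (n + 1),
      π ((Aset ∩ G) ∩ Cr k) ≤ π (Bset ∩ Cr k) := by
    intro k hk
    have hkn : k ≤ n := by have := Finset.mem_range.mp hk; omega
    have hmACr : MeasurableSet ((Aset ∩ G) ∩ Cr k) := (hmA.inter hmG).inter (hmCr k)
    have heq : π ((Phi n k) ⁻¹' ((Aset ∩ G) ∩ Cr k)) = π ((Aset ∩ G) ∩ Cr k) := by
      rw [← Measure.map_apply (measurable_Phi n k) hmACr, hπ, law_Phi μ n x hmeas k]
    rw [← heq]
    exact measure_mono (fun w hw => hstep k hkn w hw)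
  calc μ {ω | A + δ + m < ∑ i, x i ω} * μ {ω | B < ∑ i, x i ω}
      = π Aset := (htransfer _ _).symm
    _ = π (Aset ∩ G) := hAG.symm
    _ ≤ π (⋃ k ∈ Finset.range (n + 1), ((Aset ∩ G) ∩ Cr k)) + π ((Aset ∩ G) ∩ InfS) :=
        le_trans (measure_mono hcover) (measure_union_le _ _)
    _ ≤ (∑ k ∈ Finset.range (n + 1), π ((Aset ∩ G) ∩ Cr k)) + π ((Aset ∩ G) ∩ InfS) :=
        add_le_add (measure_biUnion_finset_le _ _) le_rfl
    _ ≤ (∑ k ∈ Finset.range (n + 1), π (Bset ∩ Cr k)) + π (Bset ∩ InfS) :=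
        add_le_add (Finset.sum_le_sum hstepk) (measure_mono hinf)
    _ = π ((⋃ k ∈ Finset.range (n + 1), (Bset ∩ Cr k)) ∪ (Bset ∩ InfS)) := by
        rw [measure_union hdisjInf (hmB.inter hmInf)]
        rw [measure_biUnion_finset hdisjB (fun k _ => hmB.inter (hmCr k))]
    _ ≤ π Bset := by
        apply measure_mono
        rintro w (hw | hw)
        · obtain ⟨k, _, hwk⟩ := Set.mem_iUnion₂.mp hw
          exact hwk.1
        · exact hw.1
    _ = μ {ω | B + δ < ∑ i, x i ω} * μ {ω | A < ∑ i, x i ω} := htransfer _ _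

/-- Symmetry: the sum exceeds any negative level with probability at least `1/2`. -/
lemma half_le (μ : Measure Ω) [IsProbabilityMeasure μ]
    (n : ℕ) (x : Fin n → Ω → ℝ)
    (hmeas : ∀ i, Measurable (x i))
    (hindep : iIndepFun x μ)
    (hsymm : ∀ i, μ.map (x i) = μ.map (fun ω => -(x i ω)))
    (s : ℝ) (hs : s < 0) :
    (2 : ℝ≥0∞)⁻¹ ≤ μ {ω | s < ∑ i, x i ω} := by
  haveI : ∀ i : Fin n, IsProbabilityMeasure (μ.map (x i)) :=
    fun i => Measure.isProbabilityMeasure_map (hmeas i).aemeasurable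
  haveI : ∀ i : Fin n, IsProbabilityMeasure (μ.map (fun ω => -(x i ω))) := by
    intro i; rw [← hsymm i]; infer_instance
  have hS : Measurable (fun ω => ∑ i, x i ω) :=
    Finset.measurable_sum _ fun i _ => hmeas i
  -- the laws of the vector and its negation agree
  have hvec : μ.map (fun ω (i : Fin n) => x i ω)
      = Measure.pi (fun i => μ.map (x i)) := by
    refine (Measure.pi_eq fun t ht => ?_).symm
    rw [Measure.map_apply (measurable_pi_lambda _ fun i => hmeas i)
      (MeasurableSet.univ_pi ht)]
    have hpre : (fun ω (i : Fin n) => x i ω) ⁻¹' (Set.univ.pi t) = ⋂ i, x i ⁻¹' t i := by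
      ext ω; simp [Set.mem_pi]
    rw [hpre]
    have := hindep.measure_inter_preimage_eq_mul (S := Finset.univ)
      (sets := t) (fun i _ => ht i)
    rw [show (⋂ i ∈ Finset.univ, x i ⁻¹' t i) = ⋂ i, x i ⁻¹' t i by simp] at this
    rw [this]
    exact Finset.prod_congr rfl fun i _ => (Measure.map_apply (hmeas i) (ht i)).symm
  have hnvec : μ.map (fun ω (i : Fin n) => -(x i ω))
      = Measure.pi (fun i => μ.map (fun ω => -(x i ω))) := by
    refine (Measure.pi_eq fun t ht => ?_).symm
    rw [Measure.map_apply (measurable_pi_lambda (fun ω (i : Fin n) => -(x i ω)) fun i => (hmeas i).neg)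
      (MeasurableSet.univ_pi ht)]
    have hpre : (fun ω (i : Fin n) => -(x i ω)) ⁻¹' (Set.univ.pi t)
        = ⋂ i, x i ⁻¹' ((fun r : ℝ => -r) ⁻¹' t i) := by
      ext ω; simp [Set.mem_pi]
    rw [hpre]
    have := hindep.measure_inter_preimage_eq_mul (S := Finset.univ)
      (sets := fun i => (fun r : ℝ => -r) ⁻¹' t i)
      (fun i _ => (measurable_neg (ht i) : MeasurableSet _))
    rw [show (⋂ i ∈ Finset.univ, x i ⁻¹' ((fun r : ℝ => -r) ⁻¹' t i))
        = ⋂ i, x i ⁻¹' ((fun r : ℝ => -r) ⁻¹' t i) by simp] at this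
    rw [this]
    refine Finset.prod_congr rfl fun i _ => ?_
    rw [Measure.map_apply (f := fun ω => -(x i ω)) ((hmeas i).neg) (ht i)]
    rfl
  have hlaweq : μ.map (fun ω (i : Fin n) => x i ω)
      = μ.map (fun ω (i : Fin n) => -(x i ω)) := by
    rw [hvec, hnvec]
    congr 1
    funext i
    exact hsymm i
  -- consequence: symmetry of the sum
  have hsum_symm : ∀ c : ℝ, μ {ω | c < ∑ i, x i ω} = μ {ω | c < -∑ i, x i ω} := by
    intro c
    have hset : MeasurableSet {y : Fin n → ℝ | c < ∑ i, y i} :=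
      measurableSet_lt measurable_const (Finset.measurable_sum _ fun i _ =>
        measurable_pi_apply i)
    have h1 : μ {ω | c < ∑ i, x i ω}
        = (μ.map (fun ω (i : Fin n) => x i ω)) {y | c < ∑ i, y i} := by
      rw [Measure.map_apply (measurable_pi_lambda _ fun i => hmeas i) hset]
      rfl
    have h2 : μ {ω | c < -∑ i, x i ω}
        = (μ.map (fun ω (i : Fin n) => -(x i ω))) {y | c < ∑ i, y i} := by
      rw [Measure.map_apply (measurable_pi_lambda (fun ω (i : Fin n) => -(x i ω)) fun i => (hmeas i).neg) hset]
      congr 1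
      ext ω
      simp [Finset.sum_neg_distrib]
    rw [h1, h2, hlaweq]
  have hkey : μ {ω | 0 < ∑ i, x i ω} = μ {ω | ∑ i, x i ω < 0} := by
    have := hsum_symm 0
    convert this using 2
    ext ω
    simp only [Set.mem_setOf_eq]
    constructor <;> intro h <;> linarith
  have hsplit : μ {ω | ∑ i, x i ω < 0} + μ {ω | 0 ≤ ∑ i, x i ω} = 1 := by
    have hmS : MeasurableSet {ω | ∑ i, x i ω < 0} := measurableSet_lt hS measurable_const
    have := measure_add_measure_compl (μ := μ) hmS
    rw [show {ω | ∑ i, x i ω < 0}ᶜ = {ω | 0 ≤ ∑ i, x i ω} by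
      ext ω; simp [not_lt]] at this
    rw [measure_univ] at this
    exact this
  have hhalf : (2 : ℝ≥0∞)⁻¹ ≤ μ {ω | 0 ≤ ∑ i, x i ω} := by
    by_contra h
    push_neg at h
    have h1 : μ {ω | 0 < ∑ i, x i ω} ≤ μ {ω | 0 ≤ ∑ i, x i ω} := by
      apply measure_mono
      intro ω hω
      simp only [Set.mem_setOf_eq] at *
      linarith
    have h2 : μ {ω | ∑ i, x i ω < 0} < 2⁻¹ := by
      rw [hkey.symm] at *
      exact lt_of_le_of_lt h1 h
    have h3 : μ {ω | ∑ i, x i ω < 0} + μ {ω | 0 ≤ ∑ i, x i ω} < 2⁻¹ + 2⁻¹ :=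
      ENNReal.add_lt_add h2 h
    rw [hsplit, ENNReal.inv_two_add_inv_two] at h3
    exact lt_irrefl _ h3
  refine le_trans hhalf (measure_mono fun ω hω => ?_)
  rw [Set.mem_setOf_eq] at *
  linarith

end KeyLemma

open MeasureTheory ProbabilityTheory

/-- **Relaxed log-concavity exponential decay lemma.**
`X = ∑ x_i` with `x_i` independent, symmetric around `0`, `|x_i| ≤ a_i` a.s.,
`F t = Pr[X > t]`, `m = 2 max_i a_i`. For `t ≥ 0`, `δ > 0` and `l = 1 + ⌊t/δ⌋`,
`F(t+δ+m)^l ≤ 2 F(t)^(l+1)`. -/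
theorem log_concave_exp {Ω : Type*} [MeasurableSpace Ω]
    (μ : Measure Ω) [IsProbabilityMeasure μ]
    (n : ℕ) (hn : 0 < n) (x : Fin n → Ω → ℝ) (a : Fin n → ℝ) (m : ℝ)
    (hmeas : ∀ i, Measurable (x i))
    (hindep : iIndepFun x μ)
    (hsymm : ∀ i, μ.map (x i) = μ.map (fun ω => -(x i ω)))
    (hbdd : ∀ i, ∀ᵐ ω ∂μ, |x i ω| ≤ a i)
    (hm : m = 2 * Finset.univ.sup' ⟨⟨0, hn⟩, Finset.mem_univ _⟩ a)
    (F : ℝ → ℝ) (hF : ∀ r, F r = (μ {ω | r < ∑ i, x i ω}).toReal)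
    (t δ : ℝ) (ht : 0 ≤ t) (hδ : 0 < δ) :
    F (t + δ + m) ^ (1 + ⌊t / δ⌋₊) ≤ 2 * F t ^ (1 + ⌊t / δ⌋₊ + 1) := by
  classical
  set P : ℝ → ℝ≥0∞ := fun r => μ {ω | r < ∑ i, x i ω} with hP
  -- basic facts about a and m
  have ha_nonneg : ∀ i, 0 ≤ a i := by
    intro i
    have hne : (ae μ).NeBot := ae_neBot.mpr (IsProbabilityMeasure.ne_zero μ)
    obtain ⟨ω, hω⟩ := (hbdd i).exists
    exact le_trans (abs_nonneg _) hω
  have ham : ∀ i, 2 * a i ≤ m := by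
    intro i
    rw [hm]
    have := Finset.le_sup' a (Finset.mem_univ i)
    linarith
  have hm0 : 0 ≤ m := by
    have := ham ⟨0, hn⟩
    have := ha_nonneg (⟨0, hn⟩ : Fin n)
    linarith
  set l : ℕ := 1 + ⌊t / δ⌋₊ with hl
  -- t < l * δ
  have htl : t < (l : ℝ) * δ := by
    have h1 : t / δ < (⌊t / δ⌋₊ : ℝ) + 1 := Nat.lt_floor_add_one (t / δ)
    have h2 : ((l : ℕ) : ℝ) = (⌊t / δ⌋₊ : ℝ) + 1 := by
      rw [hl]; push_cast; ring
    rw [h2]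
    calc t = (t / δ) * δ := by field_simp
      _ < ((⌊t / δ⌋₊ : ℝ) + 1) * δ := by
          apply mul_lt_mul_of_pos_right h1 hδ
  -- telescoping chain
  set c : ℕ → ℝ := fun j => t - ((l - j : ℕ) : ℝ) * δ with hc
  have hchain : ∀ j, j ≤ l → P (t + δ + m) ^ j * P (c 0) ≤ P t ^ j * P (c j) := by
    intro j
    induction j with
    | zero => intro _; simp
    | succ j ih =>
      intro hjl
      have hjl' : j < l := by omega
      have hstep := key_R μ n x a m hmeas hindep hbdd ham hm0 t (c j) δ hδ (by
        -- c j + δ ≤ t + m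
        show t - ((l - j : ℕ) : ℝ) * δ + δ ≤ t + m
        have h1 : (1 : ℝ) ≤ ((l - j : ℕ) : ℝ) := by
          have : 1 ≤ l - j := by omega
          exact_mod_cast this
        nlinarith [mul_nonneg (sub_nonneg.mpr h1) hδ.le])
      have hcsucc : c j + δ = c (j + 1) := by
        show t - ((l - j : ℕ) : ℝ) * δ + δ = t - ((l - (j + 1) : ℕ) : ℝ) * δ
        have h2 : (l - j : ℕ) = (l - (j + 1) : ℕ) + 1 := by omega
        rw [h2]
        push_cast
        ring
      rw [hcsucc] at hstep
      calc P (t + δ + m) ^ (j + 1) * P (c 0)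
          = P (t + δ + m) * (P (t + δ + m) ^ j * P (c 0)) := by ring
        _ ≤ P (t + δ + m) * (P t ^ j * P (c j)) := by
            exact mul_le_mul_right (ih (le_of_lt hjl')) _
        _ = P t ^ j * (P (t + δ + m) * P (c j)) := by ring
        _ ≤ P t ^ j * (P (c (j + 1)) * P t) := mul_le_mul_right hstep _
        _ = P t ^ (j + 1) * P (c (j + 1)) := by ring
  have hfinal := hchain l le_rfl
  have hcl : c l = t := by
    show t - ((l - l : ℕ) : ℝ) * δ = t
    simp
  have hc0 : c 0 < 0 := by
    show t - ((l - 0 : ℕ) : ℝ) * δ < 0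
    simp only [Nat.sub_zero]
    linarith
  rw [hcl] at hfinal
  have hhalf : (2 : ℝ≥0∞)⁻¹ ≤ P (c 0) :=
    half_le μ n x hmeas hindep hsymm (c 0) hc0
  -- conclude at the ENNReal level
  have hEN : P (t + δ + m) ^ l ≤ 2 * P t ^ (l + 1) := by
    have h1 : P (t + δ + m) ^ l * 2⁻¹ ≤ P t ^ l * P t :=
      le_trans (mul_le_mul_right hhalf _) hfinal
    have h2 : P (t + δ + m) ^ l = 2 * (P (t + δ + m) ^ l * 2⁻¹) := by
      rw [mul_comm (2 : ℝ≥0∞), mul_assoc, ENNReal.inv_mul_cancel two_ne_zero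
        ENNReal.ofNat_ne_top, mul_one]
    rw [h2]
    calc 2 * (P (t + δ + m) ^ l * 2⁻¹) ≤ 2 * (P t ^ l * P t) := mul_le_mul_right h1 _
      _ = 2 * P t ^ (l + 1) := by rw [pow_succ]
  -- convert to reals
  have hne : (2 : ℝ≥0∞) * P t ^ (l + 1) ≠ ⊤ := by
    apply ENNReal.mul_ne_top ENNReal.ofNat_ne_top
    exact ENNReal.pow_ne_top (measure_ne_top μ _)
  have hto := ENNReal.toReal_mono hne hEN
  rw [ENNReal.toReal_mul, ENNReal.toReal_pow, ENNReal.toReal_pow] at hto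
  simp only [ENNReal.toReal_ofNat] at hto
  calc F (t + δ + m) ^ (1 + ⌊t / δ⌋₊) = (P (t + δ + m)).toReal ^ l := by
        rw [hF]
    _ ≤ 2 * (P t).toReal ^ (l + 1) := hto
    _ = 2 * F t ^ (1 + ⌊t / δ⌋₊ + 1) := by rw [hF]
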